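/- Let G be a graph and let T be an induced subtree of G on at least 4 vertices such that every vertex of T has odd degree within T. Let r be any vertex of T and let B = (G, β) be any bicolored graph on G. Then there exists a string w of vertices of T such that |w| = 4|V(T)| - 4, B_w = B^{V(T)} (the underlying graph is unchanged and exactly the colors of the vertices of T are flipped), and w ends with r. -/

import Mathlib

open Classical

noncomputable section

/-- The local complement of a simple graph `G` at a vertex `a`: adjacency is toggled
between every pair of distinct neighbors of `a`, all other adjacencies unchanged. -/
def localComp {V : Type*} (G : SimpleGraph V) (a : V) : SimpleGraph V where
  Adj x y := (G.Adj a x ∧ G.Adj a y ∧ x ≠ y ∧ ¬ G.Adj x y) ∨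
             (G.Adj x y ∧ ¬ (G.Adj a x ∧ G.Adj a y))
  symm := by
    constructor
    intro x y h
    rcases h with ⟨hx, hy, hne, hna⟩ | ⟨h, hn⟩
    · exact Or.inl ⟨hy, hx, hne.symm, fun h' => hna h'.symm⟩
    · exact Or.inr ⟨h.symm, fun h' => hn ⟨h'.2, h'.1⟩⟩
  loopless := by
    constructor
    intro x h
    rcases h with ⟨_, _, hne, _⟩ | ⟨h, _⟩
    · exact hne rfl
    · exact G.irrefl h

/-- A bicolored graph: a simple graph together with a `{-1,1}`-coloring (units of ℤ). -/
abbrev Bicolored (V : Type*) := SimpleGraph V × (V → ℤˣ)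

/-- Local inversion at a vertex `a`: locally complement the graph at `a` and flip
the colors of all neighbors of `a`. -/
def localInv {V : Type*} (B : Bicolored V) (a : V) : Bicolored V :=
  (localComp B.1 a, fun v => if B.1.Adj a v then - B.2 v else B.2 v)

/-- Sequential local inversion along a string (list) of vertices. -/
def invSeq {V : Type*} (B : Bicolored V) (w : List V) : Bicolored V :=
  w.foldl localInv B

/-- `flipOn B S` keeps the underlying graph and flips the colors exactly on `S`. -/
def flipOn {V : Type*} (B : Bicolored V) (S : Set V) : Bicolored V :=
  (B.1, fun v => if v ∈ S then - B.2 v else B.2 v)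

end

section Aux
variable {V : Type*}

lemma localComp_adj (G : SimpleGraph V) (a x y : V) :
    (localComp G a).Adj x y ↔ ((G.Adj a x ∧ G.Adj a y ∧ x ≠ y) ≠ (G.Adj x y)) := by
  constructor
  · rintro (⟨hx, hy, hne, hna⟩ | ⟨h, hn⟩)
    · simp [hx, hy, hne, hna]
    · by_cases hx : G.Adj a x <;> by_cases hy : G.Adj a y <;> simp_all
  · intro h
    by_cases hxy : G.Adj x y
    · right
      refine ⟨hxy, ?_⟩
      intro ⟨hx, hy⟩
      exact h (by simp [hx, hy, G.ne_of_adj hxy, hxy])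
    · left
      by_cases hx : G.Adj a x <;> by_cases hy : G.Adj a y <;> by_cases hne : x = y <;>
        simp_all

lemma invSeq_append (B : Bicolored V) (w₁ w₂ : List V) :
    invSeq B (w₁ ++ w₂) = invSeq (invSeq B w₁) w₂ :=
  List.foldl_append ..

lemma flipOn_fst (B : Bicolored V) (S : Set V) : (flipOn B S).1 = B.1 := rfl

lemma flipOn_flipOn (B : Bicolored V) (S T : Set V) (h : Disjoint S T) :
    flipOn (flipOn B S) T = flipOn B (S ∪ T) := by
  unfold flipOn
  refine Prod.ext rfl ?_
  funext v
  by_cases hS : v ∈ S <;> by_cases hT : v ∈ T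
  · exact absurd (Set.mem_inter hS hT) (by simpa [Set.disjoint_iff_inter_eq_empty.mp h])
  all_goals simp [hS, hT]

end Aux

/-! ## Simulation framework -/

section Sim

structure Sim (m : ℕ) where
  A : Fin m → Fin m → Bool
  t : (Fin m → Bool) → Fin m → Bool
  q : (Fin m → Bool) → (Fin m → Bool) → Bool
  sE : (Fin m → Bool) → Bool
  sI : Fin m → Bool

variable {m : ℕ}

def Sim.step (S : Sim m) (a : Fin m) : Sim m where
  A i j := if i = j then false else xor (S.A i j) (S.A a i && S.A a j)
  t τ i := xor (S.t τ i) (S.t τ a && S.A a i)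
  q τ σ := xor (S.q τ σ) (S.t τ a && S.t σ a)
  sE τ := xor (S.sE τ) (S.t τ a)
  sI i := xor (S.sI i) (S.A a i)

def Sim.init (A₀ : Fin m → Fin m → Bool) : Sim m where
  A := A₀
  t := fun τ => τ
  q := fun _ _ => false
  sE := fun _ => false
  sI := fun _ => false

def Sim.run (A₀ : Fin m → Fin m → Bool) (w : List (Fin m)) : Sim m :=
  w.foldl Sim.step (Sim.init A₀)

variable {V : Type*} (G : SimpleGraph V) (β : V → ℤˣ) (f : Fin m → V)

/-- initial types of vertices -/
noncomputable def ty (v : V) : Fin m → Bool := fun j => decide (G.Adj (f j) v)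

def Models (B : Bicolored V) (S : Sim m) : Prop :=
  (∀ i j, B.1.Adj (f i) (f j) ↔ S.A i j = true) ∧
  (∀ i (v : V), (∀ j, v ≠ f j) → (B.1.Adj (f i) v ↔ S.t (ty G f v) i = true)) ∧
  (∀ v w : V, (∀ j, v ≠ f j) → (∀ j, w ≠ f j) → v ≠ w →
      (B.1.Adj v w ↔ xor (decide (G.Adj v w)) (S.q (ty G f v) (ty G f w)) = true)) ∧
  (∀ v : V, (∀ j, v ≠ f j) → B.2 v = if S.sE (ty G f v) then - β v else β v) ∧
  (∀ i, B.2 (f i) = if S.sI i then - β (f i) else β (f i))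

lemma models_init (A₀ : Fin m → Fin m → Bool) (hA : ∀ i j, G.Adj (f i) (f j) ↔ A₀ i j = true) :
    Models G β f (G, β) (Sim.init A₀) := by
  refine ⟨hA, ?_, ?_, ?_, ?_⟩
  · intro i v _; simp [Sim.init, ty]
  · intro v w _ _ _; simp [Sim.init]
  · intro v _; simp [Sim.init]
  · intro i; simp [Sim.init]

end Sim

section StepLemma

variable {m : ℕ} {V : Type*} (G : SimpleGraph V) (β : V → ℤˣ) (f : Fin m → V)

lemma models_step (hf : Function.Injective f) (B : Bicolored V) (S : Sim m) (a : Fin m)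
    (hB : Models G β f B S) : Models G β f (localInv B (f a)) (S.step a) := by
  obtain ⟨h1, h2, h3, h4, h5⟩ := hB
  refine ⟨?_, ?_, ?_, ?_, ?_⟩
  · intro i j
    show (localComp B.1 (f a)).Adj (f i) (f j) ↔ _
    rw [localComp_adj]
    by_cases hij : i = j
    · subst hij
      simp [Sim.step, B.1.irrefl, h1]
    · have hfij : f i ≠ f j := fun h => hij (hf h)
      simp only [h1, Sim.step, if_neg hij, hfij, Ne, not_false_iff, and_true,
        iff_true, ne_eq]
      cases hai : S.A a i <;> cases haj : S.A a j <;> cases hij' : S.A i j <;> simp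
  · intro i v hv
    show (localComp B.1 (f a)).Adj (f i) v ↔ _
    rw [localComp_adj]
    have hfiv : f i ≠ v := (hv i).symm
    simp only [h1, h2 _ _ hv, Sim.step, hfiv, Ne, not_false_iff, and_true, ne_eq]
    cases hai : S.A a i <;> cases hta : S.t (ty G f v) a <;> cases hti : S.t (ty G f v) i <;> simp
  · intro v w hv hw hvw
    show (localComp B.1 (f a)).Adj v w ↔ _
    rw [localComp_adj]
    simp only [h2 _ _ hv, h2 _ _ hw, h3 _ _ hv hw hvw, Sim.step, hvw, Ne, not_false_iff,
      and_true, ne_eq]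
    cases hta : S.t (ty G f v) a <;> cases htb : S.t (ty G f w) a <;>
      cases hq : S.q (ty G f v) (ty G f w) <;> cases hg : decide (G.Adj v w) <;> simp
  · intro v hv
    show (if B.1.Adj (f a) v then - B.2 v else B.2 v) = _
    rw [h4 _ hv]
    simp only [h2 _ _ hv, Sim.step]
    rcases Bool.eq_false_or_eq_true (S.t (ty G f v) a) with h | h <;>
      rcases Bool.eq_false_or_eq_true (S.sE (ty G f v)) with h' | h' <;> simp [h, h']
  · intro i
    show (if B.1.Adj (f a) (f i) then - B.2 (f i) else B.2 (f i)) = _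
    rw [h5 i]
    simp only [h1, Sim.step]
    rcases Bool.eq_false_or_eq_true (S.A a i) with h | h <;>
      rcases Bool.eq_false_or_eq_true (S.sI i) with h' | h' <;> simp [h, h']

lemma models_run (hf : Function.Injective f) (A₀ : Fin m → Fin m → Bool)
    (hA : ∀ i j, G.Adj (f i) (f j) ↔ A₀ i j = true) (w : List (Fin m)) :
    Models G β f (invSeq (G, β) (w.map f)) (Sim.run A₀ w) := by
  rw [Sim.run]
  induction w using List.reverseRecOn with
  | nil => exact models_init G β f A₀ hA
  | append_singleton w a ih =>
      rw [List.map_append, invSeq_append, List.foldl_append]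
      exact models_step G β f hf _ _ a ih

end StepLemma
section Extraction

variable {m : ℕ} {V : Type*} (G : SimpleGraph V) (β : V → ℤˣ) (f : Fin m → V)

lemma models_final (hf : Function.Injective f) (A₀ : Fin m → Fin m → Bool)
    (hA : ∀ i j, G.Adj (f i) (f j) ↔ A₀ i j = true) (w : List (Fin m)) (χ : Fin m → Bool)
    (hSA : (Sim.run A₀ w).A = A₀)
    (hSt : (Sim.run A₀ w).t = fun τ => τ)
    (hSq : (Sim.run A₀ w).q = fun _ _ => false)
    (hSe : (Sim.run A₀ w).sE = fun _ => false)
    (hSi : (Sim.run A₀ w).sI = χ) :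
    invSeq (G, β) (w.map f) = flipOn (G, β) (f '' {i | χ i = true}) := by
  have hM := models_run G β f hf A₀ hA w
  obtain ⟨h1, h2, h3, h4, h5⟩ := hM
  rw [hSA] at h1; rw [hSt] at h2; rw [hSq] at h3; rw [hSe] at h4; rw [hSi] at h5
  refine Prod.ext ?_ ?_
  · show (invSeq (G, β) (w.map f)).1 = G
    ext u v
    by_cases hu : ∃ i, u = f i
    · obtain ⟨i, rfl⟩ := hu
      by_cases hv : ∃ j, v = f j
      · obtain ⟨j, rfl⟩ := hv
        rw [h1, hA]
      · push_neg at hv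
        rw [h2 i v hv]
        simp [ty]
    · push_neg at hu
      by_cases hv : ∃ j, v = f j
      · obtain ⟨j, rfl⟩ := hv
        rw [(invSeq (G, β) (w.map f)).1.adj_comm, h2 j u hu, G.adj_comm]
        simp [ty]
      · push_neg at hv
        by_cases huv : u = v
        · subst huv
          simp [(invSeq (G, β) (w.map f)).1.irrefl, G.irrefl]
        · rw [h3 u v hu hv huv]
          simp
  · show (invSeq (G, β) (w.map f)).2 = fun v => if v ∈ f '' {i | χ i = true} then - β v else β v
    funext v
    by_cases hv : ∃ i, v = f i
    · obtain ⟨i, rfl⟩ := hv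
      rw [h5 i]
      have : f i ∈ f '' {i | χ i = true} ↔ χ i = true := by
        constructor
        · rintro ⟨j, hj, hfj⟩
          rwa [← hf hfj]
        · intro h; exact ⟨i, h, rfl⟩
      by_cases hχ : χ i = true
      · simp [hχ, this.mpr hχ]
      · rw [if_neg (fun hmem => hχ (this.mp hmem))]
        simp [hχ]
    · push_neg at hv
      rw [h4 v hv]
      have : v ∉ f '' {i | χ i = true} := by
        rintro ⟨j, _, hfj⟩
        exact hv j hfj.symm
      simp [this]

end Extraction

section Gadgets

variable {V : Type*} (G : SimpleGraph V) (β : V → ℤˣ)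

/-- The 8-letter gadget: flips exactly `{a,b}` when `p~a`, `p~b`, `a≁b`. -/
lemma gadget8 (p a b : V) (hab : a ≠ b) (hpa : G.Adj p a) (hpb : G.Adj p b)
    (hnab : ¬ G.Adj a b) :
    invSeq (G, β) [p, a, b, a, b, a, b, p] = flipOn (G, β) {a, b} := by
  classical
  set f : Fin 3 → V := fun i => match i with | 0 => p | 1 => a | 2 => b with hfdef
  have hpa' : p ≠ a := G.ne_of_adj hpa
  have hpb' : p ≠ b := G.ne_of_adj hpb
  have hf : Function.Injective f := by
    intro i j hij
    fin_cases i <;> fin_cases j <;> simp_all [f]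
  set A₀ : Fin 3 → Fin 3 → Bool :=
    fun i j => match i, j with
      | 0, 1 => true | 0, 2 => true | 1, 0 => true | 2, 0 => true | _, _ => false with hA₀def
  have hnba : ¬ G.Adj b a := fun h => hnab h.symm
  have hA : ∀ i j, G.Adj (f i) (f j) ↔ A₀ i j = true := by
    intro i j
    fin_cases i <;> fin_cases j <;>
      simp [f, A₀, hpa, hpb, G.irrefl, hpa.symm, hpb.symm, hnab, hnba]
  have key := models_final G β f hf A₀ hA [0, 1, 2, 1, 2, 1, 2, 0]
      (fun i => match i with | 0 => false | 1 => true | 2 => true)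
      (by decide) (by decide) (by decide) (by decide) (by decide)
  have hmap : ([0, 1, 2, 1, 2, 1, 2, 0] : List (Fin 3)).map f = [p, a, b, a, b, a, b, p] := rfl
  rw [hmap] at key
  rw [key]
  congr 1
  ext v
  constructor
  · rintro ⟨i, hi, rfl⟩
    fin_cases i <;> simp_all
  · rintro (rfl | rfl)
    · exact ⟨1, rfl, rfl⟩
    · exact ⟨2, rfl, rfl⟩

end Gadgets
section Claw

variable {V : Type*} (G : SimpleGraph V) (β : V → ℤˣ)

lemma claw_core (c x y z : V) (hxy : x ≠ y) (hxz : x ≠ z) (hyz : y ≠ z)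
    (hcx : G.Adj c x) (hcy : G.Adj c y) (hcz : G.Adj c z)
    (hnxy : ¬ G.Adj x y) (hnxz : ¬ G.Adj x z) (hnyz : ¬ G.Adj y z)
    (w₀ : List (Fin 4))
    (hSA : (Sim.run (fun i j => decide ((i = 0 ∧ j ≠ 0) ∨ (j = 0 ∧ i ≠ 0))) w₀).A
        = fun i j => decide ((i = 0 ∧ j ≠ 0) ∨ (j = 0 ∧ i ≠ 0)))
    (hSt : (Sim.run (fun i j => decide ((i = 0 ∧ j ≠ 0) ∨ (j = 0 ∧ i ≠ 0))) w₀).t = fun τ => τ)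
    (hSq : (Sim.run (fun i j => decide ((i = 0 ∧ j ≠ 0) ∨ (j = 0 ∧ i ≠ 0))) w₀).q
        = fun _ _ => false)
    (hSe : (Sim.run (fun i j => decide ((i = 0 ∧ j ≠ 0) ∨ (j = 0 ∧ i ≠ 0))) w₀).sE
        = fun _ => false)
    (hSi : (Sim.run (fun i j => decide ((i = 0 ∧ j ≠ 0) ∨ (j = 0 ∧ i ≠ 0))) w₀).sI
        = fun _ => true) :
    invSeq (G, β) (w₀.map (fun i => match i with | 0 => c | 1 => x | 2 => y | 3 => z))
      = flipOn (G, β) {c, x, y, z} := by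
  classical
  set f : Fin 4 → V := fun i => match i with | 0 => c | 1 => x | 2 => y | 3 => z with hfdef
  have hcx' := G.ne_of_adj hcx
  have hcy' := G.ne_of_adj hcy
  have hcz' := G.ne_of_adj hcz
  have hf : Function.Injective f := by
    intro i j hij
    fin_cases i <;> fin_cases j <;> simp_all [f]
  have hnyx : ¬ G.Adj y x := fun h => hnxy h.symm
  have hnzx : ¬ G.Adj z x := fun h => hnxz h.symm
  have hnzy : ¬ G.Adj z y := fun h => hnyz h.symm
  have hA : ∀ i j, G.Adj (f i) (f j)
      ↔ (fun i j => decide ((i = 0 ∧ j ≠ 0) ∨ (j = 0 ∧ i ≠ 0))) i j = true := by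
    intro i j
    fin_cases i <;> fin_cases j <;>
      simp [f, hcx, hcy, hcz, hcx.symm, hcy.symm, hcz.symm, G.irrefl,
        hnxy, hnxz, hnyz, hnyx, hnzx, hnzy]
  have key := models_final G β f hf _ hA w₀ (fun _ => true) hSA hSt hSq hSe hSi
  rw [key]
  congr 1
  ext v
  constructor
  · rintro ⟨i, _, rfl⟩
    fin_cases i <;> simp [f]
  · intro hv
    rcases hv with rfl | rfl | rfl | rfl
    · exact ⟨0, rfl, rfl⟩
    · exact ⟨1, rfl, rfl⟩
    · exact ⟨2, rfl, rfl⟩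
    · exact ⟨3, rfl, rfl⟩

/-- Claw word ending at the center. -/
lemma claw_center (c x y z : V) (hxy : x ≠ y) (hxz : x ≠ z) (hyz : y ≠ z)
    (hcx : G.Adj c x) (hcy : G.Adj c y) (hcz : G.Adj c z)
    (hnxy : ¬ G.Adj x y) (hnxz : ¬ G.Adj x z) (hnyz : ¬ G.Adj y z) :
    invSeq (G, β) [x, c, x, c, x, y, z, y, z, y, z, c] = flipOn (G, β) {c, x, y, z} := by
  have := claw_core G β c x y z hxy hxz hyz hcx hcy hcz hnxy hnxz hnyz
    [1, 0, 1, 0, 1, 2, 3, 2, 3, 2, 3, 0]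
    (by decide) (by decide) (by decide) (by decide) (by decide)
  exact this

/-- Claw word ending at the leaf `x`. -/
lemma claw_leaf (c x y z : V) (hxy : x ≠ y) (hxz : x ≠ z) (hyz : y ≠ z)
    (hcx : G.Adj c x) (hcy : G.Adj c y) (hcz : G.Adj c z)
    (hnxy : ¬ G.Adj x y) (hnxz : ¬ G.Adj x z) (hnyz : ¬ G.Adj y z) :
    invSeq (G, β) [c, x, c, x, y, z, y, z, y, z, c, x] = flipOn (G, β) {c, x, y, z} := by
  have := claw_core G β c x y z hxy hxz hyz hcx hcy hcz hnxy hnxz hnyz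
    [0, 1, 0, 1, 2, 3, 2, 3, 2, 3, 0, 1]
    (by decide) (by decide) (by decide) (by decide) (by decide)
  exact this

lemma claw_exists (c x y z r : V) (hxy : x ≠ y) (hxz : x ≠ z) (hyz : y ≠ z)
    (hcx : G.Adj c x) (hcy : G.Adj c y) (hcz : G.Adj c z)
    (hnxy : ¬ G.Adj x y) (hnxz : ¬ G.Adj x z) (hnyz : ¬ G.Adj y z)
    (hr : r = c ∨ r = x ∨ r = y ∨ r = z) :
    ∃ w : List V, (∀ u ∈ w, u = c ∨ u = x ∨ u = y ∨ u = z) ∧ w.length = 12 ∧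
      invSeq (G, β) w = flipOn (G, β) {c, x, y, z} ∧ w.getLast? = some r := by
  have hset2 : ({c, y, x, z} : Set V) = {c, x, y, z} := by
    ext v; simp; tauto
  have hset3 : ({c, z, x, y} : Set V) = {c, x, y, z} := by
    ext v; simp; tauto
  rcases hr with rfl | rfl | rfl | rfl
  · exact ⟨[x, r, x, r, x, y, z, y, z, y, z, r],
      by intro u hu; simp at hu; tauto, rfl,
      claw_center G β r x y z hxy hxz hyz hcx hcy hcz hnxy hnxz hnyz, rfl⟩
  · exact ⟨[c, r, c, r, y, z, y, z, y, z, c, r],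
      by intro u hu; simp at hu; tauto, rfl,
      claw_leaf G β c r y z hxy hxz hyz hcx hcy hcz hnxy hnxz hnyz, rfl⟩
  · refine ⟨[c, r, c, r, x, z, x, z, x, z, c, r],
      by intro u hu; simp at hu; tauto, rfl, ?_, rfl⟩
    rw [claw_leaf G β c r x z (Ne.symm hxy) hyz hxz hcy hcx hcz
      (fun h => hnxy h.symm) hnyz hnxz, hset2]
  · refine ⟨[c, r, c, r, x, y, x, y, x, y, c, r],
      by intro u hu; simp at hu; tauto, rfl, ?_, rfl⟩
    rw [claw_leaf G β c r x y (Ne.symm hxz) (Ne.symm hyz) hxy hcz hcx hcy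
      (fun h => hnxz h.symm) (fun h => hnyz h.symm) hnxy, hset3]

end Claw
section TreeComb

open SimpleGraph Finset

variable {V : Type*} [DecidableEq V]

/-- degree of `v` into `s` -/
noncomputable def ddeg (G : SimpleGraph V) (s : Finset V) (v : V) : ℕ :=
  (s.filter (fun u => G.Adj v u)).card

/-- an interior vertex of an `s`-supported path has `ddeg ≥ 2`. -/
lemma walk_interior_two_le {G : SimpleGraph V} {s : Finset V} {x y a : V}
    (w : G.Walk x y) (hw : w.IsPath) (hs : ∀ v ∈ w.support, v ∈ s)
    (ha : a ∈ w.support) (hax : a ≠ x) (hay : a ≠ y) : 2 ≤ ddeg G s a := by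
  classical
  have hqe := w.take_spec ha
  set q := w.takeUntil a ha with hqdef
  set e := w.dropUntil a ha with hedef
  have hqrn : ¬ q.reverse.Nil := SimpleGraph.Walk.not_nil_of_ne hax
  have hen : ¬ e.Nil := SimpleGraph.Walk.not_nil_of_ne hay
  obtain ⟨u₁, h₁, p₁, hq₁⟩ := SimpleGraph.Walk.not_nil_iff.mp hqrn
  obtain ⟨u₂, h₂, p₂, he₂⟩ := SimpleGraph.Walk.not_nil_iff.mp hen
  have hu₁q : u₁ ∈ q.support := by
    have : u₁ ∈ q.reverse.support := by
      rw [hq₁, SimpleGraph.Walk.support_cons]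
      exact List.mem_cons_of_mem _ p₁.start_mem_support
    rwa [SimpleGraph.Walk.support_reverse, List.mem_reverse] at this
  have hu₂e : u₂ ∈ e.support.tail := by
    rw [he₂, SimpleGraph.Walk.support_cons]
    exact p₂.start_mem_support
  have hnd : (q.support ++ e.support.tail).Nodup := by
    have := hw.support_nodup
    rwa [← hqe, SimpleGraph.Walk.support_append] at this
  have hne : u₁ ≠ u₂ := by
    rintro rfl
    exact (List.disjoint_of_nodup_append hnd) hu₁q hu₂e
  have hu₁s : u₁ ∈ s := hs _ (w.support_takeUntil_subset ha hu₁q)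
  have hu₂s : u₂ ∈ s := hs _ (w.support_dropUntil_subset ha (List.mem_of_mem_tail hu₂e))
  show 2 ≤ (s.filter (fun u => G.Adj a u)).card
  apply Finset.one_lt_card.mpr
  exact ⟨u₁, Finset.mem_filter.mpr ⟨hu₁s, h₁⟩, u₂, Finset.mem_filter.mpr ⟨hu₂s, h₂⟩, hne⟩

lemma ddeg_pos {G : SimpleGraph V} {s : Finset V}
    (hA : ∀ x ∈ s, ∀ y ∈ s, ∃! w : G.Walk x y, w.IsPath ∧ ∀ v ∈ w.support, v ∈ s)
    (hcard : 2 ≤ s.card) {v : V} (hv : v ∈ s) : 1 ≤ ddeg G s v := by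
  classical
  obtain ⟨u, hu, hne⟩ : ∃ u ∈ s, u ≠ v := by
    obtain ⟨a, ha, b, hb, hab⟩ := Finset.one_lt_card.mp hcard
    rcases eq_or_ne a v with rfl | h
    · exact ⟨b, hb, hab.symm⟩
    · exact ⟨a, ha, h⟩
  obtain ⟨w, ⟨hwp, hws⟩, _⟩ := hA v hv u hu
  have hwn : ¬ w.Nil := SimpleGraph.Walk.not_nil_of_ne hne.symm
  obtain ⟨u₁, h₁, p₁, _⟩ := SimpleGraph.Walk.not_nil_iff.mp hwn
  have hu₁s : u₁ ∈ s := by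
    apply hws
    rename_i hw1
    rw [hw1, SimpleGraph.Walk.support_cons]
    exact List.mem_cons_of_mem _ p₁.start_mem_support
  exact Finset.card_pos.mpr ⟨u₁, Finset.mem_filter.mpr ⟨hu₁s, h₁⟩⟩

lemma ddeg_le {G : SimpleGraph V} {s : Finset V} {v : V} (hv : v ∈ s) :
    ddeg G s v ≤ s.card - 1 := by
  classical
  have : s.filter (fun u => G.Adj v u) ⊆ s.erase v := by
    intro u hu
    rw [Finset.mem_filter] at hu
    exact Finset.mem_erase.mpr ⟨(G.ne_of_adj hu.2).symm, hu.1⟩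
  calc ddeg G s v ≤ (s.erase v).card := Finset.card_le_card this
    _ = s.card - 1 := Finset.card_erase_of_mem hv

lemma sum_parity {s : Finset V} {f : V → ℕ} (hodd : ∀ v ∈ s, Odd (f v)) :
    (∑ v ∈ s, f v) % 2 = s.card % 2 := by
  classical
  induction s using Finset.induction_on with
  | empty => simp
  | @insert a t ha ih =>
      rw [Finset.sum_insert ha, Finset.card_insert_of_notMem ha]
      have h1 : f a % 2 = 1 := Nat.odd_iff.mp (hodd a (Finset.mem_insert_self a t))
      have h2 := ih (fun v hv => hodd v (Finset.mem_insert_of_mem hv))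
      omega

end TreeComb
section Extract

open SimpleGraph Finset

variable {V : Type*} [DecidableEq V]

lemma end_mem_support_tail {G : SimpleGraph V} {a b : V} (w : G.Walk a b) (h : a ≠ b) :
    b ∈ w.support.tail := by
  cases w with
  | nil => exact absurd rfl h
  | cons h' p => simpa using p.end_mem_support

lemma claw_extract {G : SimpleGraph V} {s : Finset V}
    (hA : ∀ x ∈ s, ∀ y ∈ s, ∃! w : G.Walk x y, w.IsPath ∧ ∀ v ∈ w.support, v ∈ s)
    (hB : ∑ v ∈ s, ddeg G s v = 2 * (s.card - 1))
    (hodd : ∀ v ∈ s, Odd (ddeg G s v)) (hcard : s.card = 4) :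
    ∃ c x y z, s = {c, x, y, z} ∧ x ≠ y ∧ x ≠ z ∧ y ≠ z ∧
      G.Adj c x ∧ G.Adj c y ∧ G.Adj c z ∧ ¬ G.Adj x y ∧ ¬ G.Adj x z ∧ ¬ G.Adj y z := by
  classical
  have hsum : ∑ v ∈ s, ddeg G s v = 6 := by rw [hB, hcard]
  have hpos : ∀ v ∈ s, 1 ≤ ddeg G s v := fun v hv => ddeg_pos hA (by omega) hv
  have hc : ∃ c ∈ s, 2 ≤ ddeg G s c := by
    by_contra h
    push_neg at h
    have : ∀ v ∈ s, ddeg G s v = 1 := fun v hv => by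
      have := h v hv; have := hpos v hv; omega
    rw [Finset.sum_congr rfl this, Finset.sum_const, smul_eq_mul, mul_one, hcard] at hsum
    omega
  obtain ⟨c, hcs, hc2⟩ := hc
  have hc3 : ddeg G s c = 3 := by
    have h1 := hodd c hcs
    have h2 : ddeg G s c ≤ 3 := by have := ddeg_le (G := G) hcs; omega
    rcases h1 with ⟨k, hk⟩; omega
  have hfe : s.filter (fun u => G.Adj c u) = s.erase c := by
    apply Finset.eq_of_subset_of_card_le
    · intro u hu
      rw [Finset.mem_filter] at hu
      exact Finset.mem_erase.mpr ⟨(G.ne_of_adj hu.2).symm, hu.1⟩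
    · rw [Finset.card_erase_of_mem hcs, hcard]
      exact le_of_eq hc3.symm
  have herase : (s.erase c).card = 3 := by rw [Finset.card_erase_of_mem hcs, hcard]
  obtain ⟨x, y, z, hxy, hxz, hyz, hxyz⟩ := Finset.card_eq_three.mp herase
  have hmem : ∀ u, u ∈ s.erase c → G.Adj c u := by
    intro u hu
    rw [← hfe] at hu
    exact (Finset.mem_filter.mp hu).2
  have hcx : G.Adj c x := hmem x (hxyz ▸ by simp)
  have hcy : G.Adj c y := hmem y (hxyz ▸ by simp)
  have hcz : G.Adj c z := hmem z (hxyz ▸ by simp)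
  have hxs : x ∈ s := Finset.mem_of_mem_erase (hxyz ▸ by simp : x ∈ s.erase c)
  have hys : y ∈ s := Finset.mem_of_mem_erase (hxyz ▸ by simp : y ∈ s.erase c)
  have hzs : z ∈ s := Finset.mem_of_mem_erase (hxyz ▸ by simp : z ∈ s.erase c)
  have hseq : s = {c, x, y, z} := by
    have : s = insert c (s.erase c) := (Finset.insert_erase hcs).symm
    rw [this, hxyz]
  have hcx' : c ≠ x := G.ne_of_adj hcx
  have hcy' : c ≠ y := G.ne_of_adj hcy
  have hcz' : c ≠ z := G.ne_of_adj hcz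
  -- degree sum decomposition
  have hsum4 : ∑ v ∈ ({c, x, y, z} : Finset V), ddeg G s v = 6 := by
    rw [← hseq]; exact hsum
  have hsplit : ddeg G s c + ddeg G s x + ddeg G s y + ddeg G s z = 6 := by
    rw [show ({c, x, y, z} : Finset V) = insert c (insert x (insert y {z})) from rfl] at hsum4
    rw [Finset.sum_insert (by simp [hcx', hcy', hcz']),
        Finset.sum_insert (by simp [hxy, hxz]),
        Finset.sum_insert (by simp [hyz]), Finset.sum_singleton] at hsum4
    omega
  have hleaf : ddeg G s x = 1 ∧ ddeg G s y = 1 ∧ ddeg G s z = 1 := by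
    have h1 := hpos x hxs; have h2 := hpos y hys; have h3 := hpos z hzs
    omega
  have key : ∀ u w : V, u ∈ s → w ∈ s → u ≠ w → c ≠ u → c ≠ w → ddeg G s u = 1 →
      ¬ G.Adj u w := by
    intro u w hus hws huw hcu hcw hd hadj
    have : 2 ≤ ddeg G s u := by
      apply Finset.one_lt_card.mpr
      exact ⟨c, Finset.mem_filter.mpr ⟨hcs, (hmem u (Finset.mem_erase.mpr ⟨hcu.symm, hus⟩)).symm⟩,
        w, Finset.mem_filter.mpr ⟨hws, hadj⟩, hcw⟩
    omega
  exact ⟨c, x, y, z, hseq, hxy, hxz, hyz, hcx, hcy, hcz,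
    key x y hxs hys hxy hcx' hcy' hleaf.1,
    key x z hxs hzs hxz hcx' hcz' hleaf.1,
    key y z hys hzs hyz hcy' hcz' hleaf.2.1⟩

end Extract
section LeafPair

open SimpleGraph Finset

variable {V : Type*} [DecidableEq V]

lemma leaf_pair {G : SimpleGraph V} {s : Finset V} {r : V}
    (hA : ∀ x ∈ s, ∀ y ∈ s, ∃! w : G.Walk x y, w.IsPath ∧ ∀ v ∈ w.support, v ∈ s)
    (hB : ∑ v ∈ s, ddeg G s v = 2 * (s.card - 1))
    (hodd : ∀ v ∈ s, Odd (ddeg G s v)) (hcard : 5 ≤ s.card) (hr : r ∈ s) :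
    ∃ v a b, v ∈ s ∧ a ∈ s ∧ b ∈ s ∧ a ≠ b ∧ a ≠ r ∧ b ≠ r ∧
      G.Adj v a ∧ G.Adj v b ∧
      s.filter (fun u => G.Adj a u) = {v} ∧ s.filter (fun u => G.Adj b u) = {v} := by
  classical
  choose P hPp hPs using fun v hv => (hA r hr v hv).exists
  have huniq : ∀ v (hv : v ∈ s) (w : G.Walk r v), w.IsPath → (∀ u ∈ w.support, u ∈ s) →
      w = P v hv := by
    intro v hv w hwp hws
    exact ((hA r hr v hv).unique ⟨hwp, hws⟩ ⟨hPp v hv, hPs v hv⟩)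
  set L : V → ℕ := fun v => if hv : v ∈ s then (P v hv).length else 0 with hL
  set W : Finset V := s.filter (fun v => 2 ≤ ddeg G s v) with hW
  have hWne : W.Nonempty := by
    rw [Finset.nonempty_iff_ne_empty]
    intro hemp
    have hall : ∀ v ∈ s, ddeg G s v = 1 := by
      intro v hv
      have h1 := ddeg_pos hA (by omega) hv
      by_contra h
      have h2 : 2 ≤ ddeg G s v := by omega
      have : v ∈ W := Finset.mem_filter.mpr ⟨hv, h2⟩
      rw [hemp] at this
      exact absurd this (Finset.notMem_empty v)
    rw [Finset.sum_congr rfl hall, Finset.sum_const, smul_eq_mul, mul_one] at hB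
    omega
  obtain ⟨v, hvW, hmax⟩ := W.exists_max_image L hWne
  have hvs : v ∈ s := (Finset.mem_filter.mp hvW).1
  have hv3 : 3 ≤ ddeg G s v := by
    have h2 := (Finset.mem_filter.mp hvW).2
    rcases hodd v hvs with ⟨k, hk⟩
    omega
  set π : G.Walk r v := P v hvs with hπ
  have hπp : π.IsPath := hPp v hvs
  have hπs : ∀ u ∈ π.support, u ∈ s := hPs v hvs
  have hLv : L v = π.length := by rw [hL]; simp [hvs, hπ]
  set F : Finset V := s.filter (fun u => G.Adj v u) with hF
  -- each neighbor of v on π is the penultimate vertex of π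
  have hon : ∀ u ∈ F.filter (fun u => u ∈ π.support), u = π.reverse.getVert 1 := by
    intro u hu
    obtain ⟨huF, husup⟩ := Finset.mem_filter.mp hu
    obtain ⟨hus, hadj⟩ := Finset.mem_filter.mp huF
    have huv : u ≠ v := fun h => G.loopless.irrefl v (h ▸ hadj)
    set q := π.takeUntil u husup with hqdef
    have hqp : q.IsPath := hπp.takeUntil husup
    have hvq : v ∉ q.support := by
      intro hvin
      have hnd := hπp.support_nodup
      rw [← π.take_spec husup, SimpleGraph.Walk.support_append] at hnd
      have hvtail : v ∈ (π.dropUntil u husup).support.tail :=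
        end_mem_support_tail _ huv
      exact (List.disjoint_of_nodup_append hnd) hvin hvtail
    have hadj' : G.Adj u v := hadj.symm
    set q' := q.concat hadj' with hq'def
    have hq'p : q'.IsPath := by
      rw [SimpleGraph.Walk.isPath_def, hq'def, SimpleGraph.Walk.support_concat]
      rw [List.nodup_append]
      exact ⟨hqp.support_nodup, List.nodup_singleton v,
        fun a ha b hb => by rw [List.mem_singleton] at hb; exact fun hab => hvq (by rw [← hb, ← hab]; exact ha)⟩
    have hq's : ∀ w ∈ q'.support, w ∈ s := by
      intro w hw
      rw [hq'def, SimpleGraph.Walk.support_concat,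
        List.mem_append] at hw
      rcases hw with hw | hw
      · exact hπs _ (π.support_takeUntil_subset husup hw)
      · rw [List.mem_singleton] at hw; exact hw ▸ hvs
    have : q' = π := huniq v hvs q' hq'p hq's
    have hrev : π.reverse = SimpleGraph.Walk.cons hadj'.symm q.reverse := by
      rw [← this, hq'def, SimpleGraph.Walk.reverse_concat]
    rw [hrev, SimpleGraph.Walk.getVert_cons_succ, SimpleGraph.Walk.getVert_zero]
  have hcard_on : (F.filter (fun u => u ∈ π.support)).card ≤ 1 := by
    apply Finset.card_le_one.mpr
    intro a ha b hb
    rw [hon a ha, hon b hb]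
  have hcard_off : 2 ≤ (F.filter (fun u => u ∉ π.support)).card := by
    have := Finset.card_filter_add_card_filter_not
      (s := F) (p := fun u => u ∈ π.support)
    have hFc : F.card = ddeg G s v := rfl
    omega
  obtain ⟨a, ha, b, hb, hab⟩ := Finset.one_lt_card.mp hcard_off
  -- properties of off-path neighbors
  have hoff : ∀ u, u ∈ F.filter (fun u => u ∉ π.support) →
      u ∈ s ∧ u ≠ r ∧ G.Adj v u ∧ s.filter (fun w => G.Adj u w) = {v} := by
    intro u hu
    obtain ⟨huF, husup⟩ := Finset.mem_filter.mp hu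
    obtain ⟨hus, hadj⟩ := Finset.mem_filter.mp huF
    have hur : u ≠ r := by
      rintro rfl
      exact husup π.start_mem_support
    set ρ := π.concat hadj with hρdef
    have hρp : ρ.IsPath := by
      rw [SimpleGraph.Walk.isPath_def, hρdef, SimpleGraph.Walk.support_concat,
        List.nodup_append]
      exact ⟨hπp.support_nodup, List.nodup_singleton u,
        fun a ha b hb => by rw [List.mem_singleton] at hb; exact fun hab => husup (by rw [← hb, ← hab]; exact ha)⟩
    have hρs : ∀ w ∈ ρ.support, w ∈ s := by
      intro w hw
      rw [hρdef, SimpleGraph.Walk.support_concat,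
        List.mem_append] at hw
      rcases hw with hw | hw
      · exact hπs _ hw
      · rw [List.mem_singleton] at hw; exact hw ▸ hus
    have hρeq : ρ = P u hus := huniq u hus ρ hρp hρs
    have hLu : L u = π.length + 1 := by
      rw [hL]
      simp only [hus, dif_pos]
      rw [← hρeq, hρdef, SimpleGraph.Walk.length_concat]
    have hd1 : ddeg G s u ≤ 1 := by
      by_contra h
      have h2 : 2 ≤ ddeg G s u := by omega
      have huW : u ∈ W := Finset.mem_filter.mpr ⟨hus, h2⟩
      have := hmax u huW
      rw [hLu, hLv] at this
      omega
    have hfilter : s.filter (fun w => G.Adj u w) = {v} := by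
      have hvmem : v ∈ s.filter (fun w => G.Adj u w) :=
        Finset.mem_filter.mpr ⟨hvs, hadj.symm⟩
      apply Finset.eq_singleton_iff_unique_mem.mpr
      refine ⟨hvmem, fun x hx => ?_⟩
      have : (s.filter (fun w => G.Adj u w)).card ≤ 1 := hd1
      exact Finset.card_le_one.mp this x hx v hvmem
    exact ⟨hus, hur, hadj, hfilter⟩
  obtain ⟨has, har, hva, hfa⟩ := hoff a ha
  obtain ⟨hbs, hbr, hvb, hfb⟩ := hoff b hb
  exact ⟨v, a, b, hvs, has, hbs, hab, har, hbr, hva, hvb, hfa, hfb⟩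

end LeafPair
section MainInd

open SimpleGraph Finset

variable {V : Type*} [DecidableEq V]

lemma main_ind (n : ℕ) : ∀ (G : SimpleGraph V) (s : Finset V) (r : V) (β : V → ℤˣ),
    s.card = n → 4 ≤ s.card →
    (∀ x ∈ s, ∀ y ∈ s, ∃! w : G.Walk x y, w.IsPath ∧ ∀ v ∈ w.support, v ∈ s) →
    (∑ v ∈ s, ddeg G s v = 2 * (s.card - 1)) →
    (∀ v ∈ s, Odd (ddeg G s v)) → r ∈ s →
    ∃ w : List V, (∀ x ∈ w, x ∈ s) ∧ w.length = 4 * s.card - 4 ∧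
      invSeq (G, β) w = flipOn (G, β) (↑s : Set V) ∧ w.getLast? = some r := by
  induction n using Nat.strong_induction_on with
  | _ n ih =>
    intro G s r β hn hcard4 hA hB hodd hr
    rcases eq_or_lt_of_le hcard4 with hc4 | hc5
    · -- base case: claw
      obtain ⟨c, x, y, z, hseq, hxy, hxz, hyz, hcx, hcy, hcz, hnxy, hnxz, hnyz⟩ :=
        claw_extract hA hB hodd hc4.symm
      have hrmem : r = c ∨ r = x ∨ r = y ∨ r = z := by
        rw [hseq] at hr
        simpa using hr
      obtain ⟨w, hwmem, hwlen, hwinv, hwlast⟩ :=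
        claw_exists G β c x y z r hxy hxz hyz hcx hcy hcz hnxy hnxz hnyz hrmem
      refine ⟨w, ?_, ?_, ?_, hwlast⟩
      · intro u hu
        rcases hwmem u hu with rfl | rfl | rfl | rfl <;> rw [hseq] <;> simp
      · rw [← hc4]; exact hwlen
      · rw [hwinv]
        congr 1
        rw [hseq]
        simp
    · -- inductive step
      have hcard5 : 5 ≤ s.card := hc5
      obtain ⟨v, a, b, hvs, has, hbs, hab, har, hbr, hva, hvb, hfa, hfb⟩ :=
        leaf_pair hA hB hodd hcard5 hr
      have hav : a ≠ v := fun h => G.loopless.irrefl v (h ▸ hva).symm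
      have hbv : b ≠ v := fun h => G.loopless.irrefl v (h ▸ hvb).symm
      have hnab : ¬ G.Adj a b := by
        intro h
        have : b ∈ s.filter (fun u => G.Adj a u) := Finset.mem_filter.mpr ⟨hbs, h⟩
        rw [hfa, Finset.mem_singleton] at this
        exact hbv this
      -- even cardinality
      have heven : s.card % 2 = 0 := by
        have := sum_parity hodd
        rw [hB] at this
        omega
      have hcard6 : 6 ≤ s.card := by omega
      set s' : Finset V := (s.erase a).erase b with hs'
      have hmem' : ∀ u, u ∈ s' ↔ u ∈ s ∧ u ≠ a ∧ u ≠ b := by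
        intro u
        rw [hs', Finset.mem_erase, Finset.mem_erase]
        tauto
      have hvs' : v ∈ s' := (hmem' v).mpr ⟨hvs, fun h => hav h.symm, fun h => hbv h.symm⟩
      have hrs' : r ∈ s' := (hmem' r).mpr ⟨hr, fun h => har h.symm, fun h => hbr h.symm⟩
      have hcard' : s'.card = s.card - 2 := by
        rw [hs', Finset.card_erase_of_mem (Finset.mem_erase.mpr ⟨hab.symm, hbs⟩),
          Finset.card_erase_of_mem has]
        omega
      have hda : ddeg G s a = 1 := by rw [ddeg, hfa]; rfl
      have hdb : ddeg G s b = 1 := by rw [ddeg, hfb]; rfl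
      -- a and b have no neighbors in s other than v
      have hnbr : ∀ u ∈ s, u ≠ v → ¬ G.Adj a u ∧ ¬ G.Adj b u := by
        intro u hus huv
        constructor
        · intro h
          have : u ∈ s.filter (fun w => G.Adj a w) := Finset.mem_filter.mpr ⟨hus, h⟩
          rw [hfa, Finset.mem_singleton] at this
          exact huv this
        · intro h
          have : u ∈ s.filter (fun w => G.Adj b w) := Finset.mem_filter.mpr ⟨hus, h⟩
          rw [hfb, Finset.mem_singleton] at this
          exact huv this
      -- paths avoid a and b
      have hA' : ∀ x ∈ s', ∀ y ∈ s', ∃! w : G.Walk x y, w.IsPath ∧ ∀ u ∈ w.support, u ∈ s' := by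
        intro x hx y hy
        obtain ⟨hxs, hxa, hxb⟩ := (hmem' x).mp hx
        obtain ⟨hys, hya, hyb⟩ := (hmem' y).mp hy
        obtain ⟨w, ⟨hwp, hws⟩, hwu⟩ := hA x hxs y hys
        have hsupp' : ∀ u ∈ w.support, u ∈ s' := by
          intro u hu
          have hus := hws u hu
          refine (hmem' u).mpr ⟨hus, ?_, ?_⟩
          · rintro rfl
            have := walk_interior_two_le w hwp hws hu (Ne.symm hxa) (Ne.symm hya)
            rw [hda] at this; omega
          · rintro rfl
            have := walk_interior_two_le w hwp hws hu (Ne.symm hxb) (Ne.symm hyb)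
            rw [hdb] at this; omega
        refine ⟨w, ⟨hwp, hsupp'⟩, ?_⟩
        intro w' ⟨hw'p, hw's⟩
        exact hwu w' ⟨hw'p, fun u hu => ((hmem' u).mp (hw's u hu)).1⟩
      -- local degrees in s'
      have hd' : ∀ u ∈ s', u ≠ v → ddeg G s' u = ddeg G s u := by
        intro u hu huv
        rw [ddeg, ddeg, hs', Finset.filter_erase, Finset.filter_erase]
        rw [Finset.erase_eq_of_notMem, Finset.erase_eq_of_notMem]
        · intro h
          exact (hnbr u ((hmem' u).mp hu).1 huv).1 ((Finset.mem_filter.mp h).2).symm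
        · intro h
          have h2 := (Finset.mem_filter.mp (Finset.mem_erase.mp h).2).2
          exact (hnbr u ((hmem' u).mp hu).1 huv).2 h2.symm
      have hdv' : ddeg G s' v = ddeg G s v - 2 := by
        have m1 : a ∈ s.filter (fun u => G.Adj v u) := Finset.mem_filter.mpr ⟨has, hva⟩
        have m2 : b ∈ (s.filter (fun u => G.Adj v u)).erase a :=
          Finset.mem_erase.mpr ⟨hab.symm, Finset.mem_filter.mpr ⟨hbs, hvb⟩⟩
        rw [ddeg, ddeg, hs', Finset.filter_erase, Finset.filter_erase,
          Finset.card_erase_of_mem m2, Finset.card_erase_of_mem m1]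
        omega
      have hdv3 : 3 ≤ ddeg G s v := by
        have h2 : 1 < (s.filter (fun u => G.Adj v u)).card :=
          Finset.one_lt_card.mpr
            ⟨a, Finset.mem_filter.mpr ⟨has, hva⟩, b, Finset.mem_filter.mpr ⟨hbs, hvb⟩, hab⟩
        have h2' : 2 ≤ ddeg G s v := h2
        have hk := Nat.odd_iff.mp (hodd v hvs)
        omega
      have hodd' : ∀ u ∈ s', Odd (ddeg G s' u) := by
        intro u hu
        rcases eq_or_ne u v with rfl | huv
        · rw [hdv']
          rcases hodd u hvs with ⟨k, hk⟩
          rw [Nat.odd_iff]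
          omega
        · rw [hd' u hu huv]
          exact hodd u ((hmem' u).mp hu).1
      have hB' : ∑ u ∈ s', ddeg G s' u = 2 * (s'.card - 1) := by
        have e1 : ∑ u ∈ s'.erase v, ddeg G s' u + ddeg G s' v = ∑ u ∈ s', ddeg G s' u :=
          Finset.sum_erase_add _ _ hvs'
        have e2 : ∑ u ∈ s'.erase v, ddeg G s u + ddeg G s v = ∑ u ∈ s', ddeg G s u :=
          Finset.sum_erase_add _ _ hvs'
        have e3 : ∑ u ∈ s'.erase v, ddeg G s' u = ∑ u ∈ s'.erase v, ddeg G s u := by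
          apply Finset.sum_congr rfl
          intro u hu
          exact hd' u (Finset.mem_of_mem_erase hu) (Finset.ne_of_mem_erase hu)
        have e4 : ∑ u ∈ (s.erase a), ddeg G s u + ddeg G s a = ∑ u ∈ s, ddeg G s u :=
          Finset.sum_erase_add _ _ has
        have e5 : ∑ u ∈ s', ddeg G s u + ddeg G s b = ∑ u ∈ (s.erase a), ddeg G s u := by
          rw [hs']
          exact Finset.sum_erase_add _ _ (Finset.mem_erase.mpr ⟨hab.symm, hbs⟩)
        rw [hcard']
        omega
      -- apply IH
      have hlt : s.card - 2 < n := by omega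
      have hcard4' : 4 ≤ s'.card := by omega
      obtain ⟨w', hw'mem, hw'len, hw'inv, hw'last⟩ :=
        ih (s.card - 2) hlt G s' r (flipOn (G, β) {a, b}).2 (by omega) hcard4' hA' hB' hodd' hrs'
      refine ⟨[v, a, b, a, b, a, b, v] ++ w', ?_, ?_, ?_, ?_⟩
      · intro u hu
        rw [List.mem_append] at hu
        rcases hu with hu | hu
        · have : u = v ∨ u = a ∨ u = b ∨ u = a ∨ u = b ∨ u = a ∨ u = b ∨ u = v := by
            simpa using hu
          rcases this with rfl | rfl | rfl | rfl | rfl | rfl | rfl | rfl <;> assumption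
        · exact ((hmem' u).mp (hw'mem u hu)).1
      · rw [List.length_append, hw'len, hcard']
        simp
        omega
      · rw [invSeq_append, gadget8 G β v a b hab hva hvb hnab]
        have : flipOn (G, β) {a, b} = ((G : SimpleGraph V), (flipOn (G, β) {a, b}).2) := rfl
        rw [this] at hw'inv ⊢
        rw [hw'inv, ← this, flipOn_flipOn _ _ _ ?_]
        · congr 1
          ext u
          simp only [Set.mem_union, Set.mem_insert_iff, Set.mem_singleton_iff,
            Finset.coe_insert, Finset.mem_coe]
          constructor
          · rintro ((rfl | rfl) | hu)
            · exact has
            · exact hbs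
            · exact ((hmem' u).mp hu).1
          · intro hu
            rcases eq_or_ne u a with rfl | hua
            · exact Or.inl (Or.inl rfl)
            rcases eq_or_ne u b with rfl | hub
            · exact Or.inl (Or.inr rfl)
            exact Or.inr ((hmem' u).mpr ⟨hu, hua, hub⟩)
        · rw [Set.disjoint_left]
          intro u hu hu'
          have h1 : u = a ∨ u = b := by simpa using hu
          have h2 := (hmem' u).mp (by simpa using hu')
          rcases h1 with rfl | rfl
          · exact h2.2.1 rfl
          · exact h2.2.2 rfl
      · rw [List.getLast?_append_of_ne_nil]
        · exact hw'last
        · intro h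
          rw [h] at hw'len
          simp at hw'len
          omega

end MainInd

section Bridge

open SimpleGraph Finset

variable {V : Type*} [DecidableEq V]

/-- The inclusion homomorphism from an induced subgraph. -/
def inducedHom (G : SimpleGraph V) (t : Set V) : G.induce t →g G :=
  ⟨Subtype.val, fun {u v} h => h⟩

lemma lift_walk {G : SimpleGraph V} {s : Finset V} :
    ∀ {x y : V} (hx : x ∈ (↑s : Set V)) (hy : y ∈ (↑s : Set V)) (w : G.Walk x y),
      (∀ v ∈ w.support, v ∈ s) →
      ∃ w' : (G.induce (↑s : Set V)).Walk ⟨x, hx⟩ ⟨y, hy⟩,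
        w'.map (inducedHom G (↑s : Set V)) = w := by
  intro x y hx hy w
  induction w with
  | nil => exact fun _ => ⟨SimpleGraph.Walk.nil, rfl⟩
  | @cons u b y h p ih =>
      intro hsupp
      have hb : b ∈ (↑s : Set V) := by
        have : b ∈ p.support := p.start_mem_support
        exact Finset.mem_coe.mpr (hsupp b (by simp [this]))
      obtain ⟨p', hp'⟩ := ih hb hy (fun v hv => hsupp v (by simp [hv]))
      exact ⟨SimpleGraph.Walk.cons (by exact h) p', by subst hp'; rfl⟩
  
lemma hA_of_tree {G : SimpleGraph V} {s : Finset V}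
    (htree : (G.induce (↑s : Set V)).IsTree) :
    ∀ x ∈ s, ∀ y ∈ s, ∃! w : G.Walk x y, w.IsPath ∧ ∀ v ∈ w.support, v ∈ s := by
  intro x hx y hy
  have hx' : x ∈ (↑s : Set V) := Finset.mem_coe.mpr hx
  have hy' : y ∈ (↑s : Set V) := Finset.mem_coe.mpr hy
  obtain ⟨p, hp, hup⟩ := htree.existsUnique_path ⟨x, hx'⟩ ⟨y, hy'⟩
  have hinj : Function.Injective (inducedHom G (↑s : Set V)) := Subtype.val_injective
  refine ⟨p.map (inducedHom G (↑s : Set V)), ⟨?_, ?_⟩, ?_⟩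
  · exact SimpleGraph.Walk.map_isPath_of_injective hinj hp
  · intro v hv
    replace hv : v ∈ (p.map (inducedHom G (↑s : Set V))).support := hv
    rw [SimpleGraph.Walk.support_map, List.mem_map] at hv
    obtain ⟨u, _, rfl⟩ := hv
    exact Finset.mem_coe.mp u.2
  · intro w ⟨hwp, hws⟩
    obtain ⟨w', hw'⟩ := lift_walk hx' hy' w hws
    have hw'p : w'.IsPath := by
      apply SimpleGraph.Walk.IsPath.of_map (f := inducedHom G (↑s : Set V))
      rw [hw']
      exact hwp
    have : w' = p := hup w' hw'p
    rw [← hw', this]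

lemma hB_of_tree [Fintype V] {G : SimpleGraph V} {s : Finset V}
    (htree : (G.induce (↑s : Set V)).IsTree) :
    ∑ v ∈ s, ddeg G s v = 2 * (s.card - 1) := by
  classical
  set T := G.induce (↑s : Set V) with hT
  have hcardeq : Fintype.card ↥(↑s : Set V) = s.card := by
    rw [← Fintype.card_coe s]
    exact Fintype.card_congr (Equiv.subtypeEquivRight (fun x => Finset.mem_coe))
  have hedge : T.edgeFinset.card + 1 = s.card := by
    rw [htree.card_edgeFinset, hcardeq]
  have hdeg : ∀ v : ↥(↑s : Set V), T.degree v = ddeg G s ↑v := by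
    intro v
    rw [SimpleGraph.degree, ddeg]
    apply Finset.card_bij (i := fun (u : ↥(↑s : Set V)) _ => (u : V))
    · intro u hu
      rw [SimpleGraph.mem_neighborFinset] at hu
      exact Finset.mem_filter.mpr ⟨Finset.mem_coe.mp u.2, hu⟩
    · intro u _ u' _ h
      exact Subtype.val_injective h
    · intro u hu
      obtain ⟨hus, hadj⟩ := Finset.mem_filter.mp hu
      exact ⟨⟨u, Finset.mem_coe.mpr hus⟩, by rw [SimpleGraph.mem_neighborFinset]; exact hadj, rfl⟩
  have hsum : ∑ v : ↥(↑s : Set V), T.degree v = ∑ v ∈ s, ddeg G s v := by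
    rw [Fintype.sum_congr _ _ hdeg]
    rw [← Finset.sum_coe_sort s (fun v => ddeg G s v)]
    exact Fintype.sum_equiv (Equiv.subtypeEquivRight (fun x => Finset.mem_coe))
      _ _ (fun u => rfl)
  have hhand := SimpleGraph.sum_degrees_eq_twice_card_edges T
  rw [hsum] at hhand
  omega

end Bridge


/-- Color-reversing an induced odd subtree `T` (on vertex set `s`, with at least 4
vertices) of `G` via a string of length `4|V(T)| - 4` over `V(T)` ending at a
prescribed vertex `r`. -/
theorem stmt12 {V : Type*} [Fintype V] [DecidableEq V] (G : SimpleGraph V)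
    (s : Finset V) (hcard : 4 ≤ s.card)
    (htree : (G.induce (s : Set V)).IsTree)
    (hodd : ∀ v ∈ s, Odd ((s.filter (fun u => G.Adj v u)).card))
    (r : V) (hr : r ∈ s) (β : V → ℤˣ) :
    ∃ w : List V, (∀ x ∈ w, x ∈ s) ∧ w.length = 4 * s.card - 4 ∧
      invSeq (G, β) w = flipOn (G, β) (s : Set V) ∧ w.getLast? = some r := by
  exact main_ind s.card G s r β rfl hcard (hA_of_tree htree) (hB_of_tree htree)
    (fun v hv => hodd v hv) hr
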